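/- Let X be a coalgebra and s an invertible left non-degenerate coalgebra endomorphism of X⊗X (a coalgebra automorphism). Then s̃^{-1} (i.e., s^{-1} regarded as an endomorphism of X^cop ⊗ X^cop) is left non-degenerate, and the associated q-magma coalgebra of s̃^{-1} equals the opposite q-magma coalgebra 𝒳^op = (X^cop; ⊥, ·) of the q-magma coalgebra 𝒳 = (X; ·, ⊥) associated with s. -/

import Mathlib

open TensorProduct

noncomputable section

variable (k : Type) [Field k] (X : Type) [AddCommGroup X] [Module k X] [Coalgebra k X]

/-- x ⊗ y ↦ ε(y) x -/
def cE : X ⊗[k] X →ₗ[k] X :=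
  (TensorProduct.rid k X).toLinearMap ∘ₗ LinearMap.lTensor X (Coalgebra.counit (R := k))

/-- x ⊗ y ↦ ε(x) y -/
def cE' : X ⊗[k] X →ₗ[k] X :=
  (TensorProduct.lid k X).toLinearMap ∘ₗ LinearMap.rTensor X (Coalgebra.counit (R := k))

/-- first Sweedler component of a morphism `X⊗X → X⊗X` -/
def comp1 (s : X ⊗[k] X →ₗ[k] X ⊗[k] X) : X ⊗[k] X →ₗ[k] X := cE k X ∘ₗ s

/-- second Sweedler component of a morphism `X⊗X → X⊗X` -/
def comp2 (s : X ⊗[k] X →ₗ[k] X ⊗[k] X) : X ⊗[k] X →ₗ[k] X := cE' k X ∘ₗ s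

/-- `Gmap f (x ⊗ y) = f (x ⊗ y₍₁₎) ⊗ y₍₂₎` -/
def Gmap (f : X ⊗[k] X →ₗ[k] X) : X ⊗[k] X →ₗ[k] X ⊗[k] X :=
  TensorProduct.map f LinearMap.id ∘ₗ (TensorProduct.assoc k X X X).symm.toLinearMap ∘ₗ
    LinearMap.lTensor X (Coalgebra.comul (R := k))

/-- comultiplication of `X^cop` -/
def comulCop : X →ₗ[k] X ⊗[k] X :=
  (TensorProduct.comm k X X).toLinearMap ∘ₗ Coalgebra.comul (R := k)

/-- `GmapCop f (x ⊗ y) = f (x ⊗ y₍₂₎) ⊗ y₍₁₎` -/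
def GmapCop (f : X ⊗[k] X →ₗ[k] X) : X ⊗[k] X →ₗ[k] X ⊗[k] X :=
  TensorProduct.map f LinearMap.id ∘ₗ (TensorProduct.assoc k X X X).symm.toLinearMap ∘ₗ
    LinearMap.lTensor X (comulCop k X)

/-- comultiplication of `X ⊗ X` -/
def comulT : X ⊗[k] X →ₗ[k] (X ⊗[k] X) ⊗[k] (X ⊗[k] X) :=
  (TensorProduct.tensorTensorTensorComm k X X X X).toLinearMap ∘ₗ
    TensorProduct.map (Coalgebra.comul (R := k)) (Coalgebra.comul (R := k))

/-- comultiplication of `X ⊗ X^cop` -/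
def comulTCop : X ⊗[k] X →ₗ[k] (X ⊗[k] X) ⊗[k] (X ⊗[k] X) :=
  (TensorProduct.tensorTensorTensorComm k X X X X).toLinearMap ∘ₗ
    TensorProduct.map (Coalgebra.comul (R := k)) (comulCop k X)

/-- comultiplication of `X^cop ⊗ X^cop` -/
def comulTcc : X ⊗[k] X →ₗ[k] (X ⊗[k] X) ⊗[k] (X ⊗[k] X) :=
  (TensorProduct.tensorTensorTensorComm k X X X X).toLinearMap ∘ₗ
    TensorProduct.map (comulCop k X) (comulCop k X)

/-- counit of `X ⊗ X` -/
def counitT : X ⊗[k] X →ₗ[k] k :=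
  (TensorProduct.lid k k).toLinearMap ∘ₗ
    TensorProduct.map (Coalgebra.counit (R := k)) (Coalgebra.counit (R := k))

/-- `s : X⊗X → X⊗X` is a coalgebra morphism -/
def IsCoalgEndo (s : X ⊗[k] X →ₗ[k] X ⊗[k] X) : Prop :=
  comulT k X ∘ₗ s = TensorProduct.map s s ∘ₗ comulT k X ∧ counitT k X ∘ₗ s = counitT k X

/-- `f : X⊗X → X` is a coalgebra morphism -/
def IsCoalgMor (f : X ⊗[k] X →ₗ[k] X) : Prop :=
  Coalgebra.comul (R := k) ∘ₗ f = TensorProduct.map f f ∘ₗ comulT k X ∧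
  Coalgebra.counit (R := k) ∘ₗ f = counitT k X

/-- `f : X ⊗ X^cop → X` is a coalgebra morphism -/
def IsCoalgMorCop (f : X ⊗[k] X →ₗ[k] X) : Prop :=
  Coalgebra.comul (R := k) ∘ₗ f = TensorProduct.map f f ∘ₗ comulTCop k X ∧
  Coalgebra.counit (R := k) ∘ₗ f = counitT k X

/-- the operation `x ⊥ y := s₁ ((y·x₍₁₎) ⊗ x₍₂₎)` -/
def dOf (s : X ⊗[k] X →ₗ[k] X ⊗[k] X) (p : X ⊗[k] X →ₗ[k] X) : X ⊗[k] X →ₗ[k] X :=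
  comp1 k X s ∘ₗ Gmap k X p ∘ₗ (TensorProduct.comm k X X).toLinearMap

/-- the operation `⊥` of the endomorphism `s` viewed on `X^cop ⊗ X^cop` -/
def dOfCop (s : X ⊗[k] X →ₗ[k] X ⊗[k] X) (p : X ⊗[k] X →ₗ[k] X) : X ⊗[k] X →ₗ[k] X :=
  comp1 k X s ∘ₗ GmapCop k X p ∘ₗ (TensorProduct.comm k X X).toLinearMap

/-- left non-degeneracy of `s` : `G_s` is invertible -/
def LeftNonDeg (s : X ⊗[k] X →ₗ[k] X ⊗[k] X) : Prop :=
  Function.Bijective (Gmap k X (comp2 k X s))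

/-- `p` is the operation `·` associated with a left non-degenerate `s`, i.e.
`(x·y₍₁₎)^(y₍₂₎) = x^(y₍₁₎)·y₍₂₎ = ε(y)x`. -/
def IsDotOf (s : X ⊗[k] X →ₗ[k] X ⊗[k] X) (p : X ⊗[k] X →ₗ[k] X) : Prop :=
  comp2 k X s ∘ₗ Gmap k X p = cE k X ∧ p ∘ₗ Gmap k X (comp2 k X s) = cE k X

def s12m (s : X ⊗[k] X →ₗ[k] X ⊗[k] X) : (X ⊗[k] X) ⊗[k] X →ₗ[k] (X ⊗[k] X) ⊗[k] X :=
  LinearMap.rTensor X s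

def s23m (s : X ⊗[k] X →ₗ[k] X ⊗[k] X) : (X ⊗[k] X) ⊗[k] X →ₗ[k] (X ⊗[k] X) ⊗[k] X :=
  (TensorProduct.assoc k X X X).symm.toLinearMap ∘ₗ LinearMap.lTensor X s ∘ₗ
    (TensorProduct.assoc k X X X).toLinearMap

/-- the braid equation -/
def IsBraidSol (s : X ⊗[k] X →ₗ[k] X ⊗[k] X) : Prop :=
  s12m k X s ∘ₗ s23m k X s ∘ₗ s12m k X s = s23m k X s ∘ₗ s12m k X s ∘ₗ s23m k X s

/-- the exchange identity `y₍₁₎⊥x₍₂₎ ⊗ x₍₁₎·y₍₂₎ = y₍₂₎⊥x₍₁₎ ⊗ x₍₂₎·y₍₁₎` -/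
def ExchangeId (p d : X ⊗[k] X →ₗ[k] X) : Prop :=
  ∀ (x y : X) (n m : ℕ) (x1 x2 : Fin n → X) (y1 y2 : Fin m → X),
    (∑ i, x1 i ⊗ₜ[k] x2 i) = Coalgebra.comul (R := k) x →
    (∑ j, y1 j ⊗ₜ[k] y2 j) = Coalgebra.comul (R := k) y →
    (∑ i, ∑ j, d (y1 j ⊗ₜ[k] x2 i) ⊗ₜ[k] p (x1 i ⊗ₜ[k] y2 j)) =
      ∑ i, ∑ j, d (y2 j ⊗ₜ[k] x1 i) ⊗ₜ[k] p (x2 i ⊗ₜ[k] y1 j)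

/-- the three q-cycle coalgebra conditions -/
def QCycleConds (p d : X ⊗[k] X →ₗ[k] X) : Prop :=
  ∀ (x y z : X) (n m : ℕ) (y1 y2 : Fin n → X) (z1 z2 : Fin m → X),
    (∑ i, y1 i ⊗ₜ[k] y2 i) = Coalgebra.comul (R := k) y →
    (∑ j, z1 j ⊗ₜ[k] z2 j) = Coalgebra.comul (R := k) z →
    ((∑ i, p (p (x ⊗ₜ[k] y1 i) ⊗ₜ[k] d (z ⊗ₜ[k] y2 i))) =
        ∑ j, p (p (x ⊗ₜ[k] z2 j) ⊗ₜ[k] p (y ⊗ₜ[k] z1 j)) ∧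
     (∑ i, d (p (x ⊗ₜ[k] y1 i) ⊗ₜ[k] p (z ⊗ₜ[k] y2 i))) =
        ∑ j, p (d (x ⊗ₜ[k] z2 j) ⊗ₜ[k] d (y ⊗ₜ[k] z1 j)) ∧
     (∑ i, d (d (x ⊗ₜ[k] y1 i) ⊗ₜ[k] d (z ⊗ₜ[k] y2 i))) =
        ∑ j, d (d (x ⊗ₜ[k] z2 j) ⊗ₜ[k] p (y ⊗ₜ[k] z1 j)))


/-- the left action `ˣy := y₍₂₎ ⊥ x^(y₍₁₎)`, where `g` is the operation `x^y` -/
def bOf (g d : X ⊗[k] X →ₗ[k] X) : X ⊗[k] X →ₗ[k] X :=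
  d ∘ₗ (TensorProduct.comm k X X).toLinearMap ∘ₗ Gmap k X g

/-- the left action `_xy := y₍₁₎ · x_(y₍₂₎)`, where `g'` is the operation `x_y` -/
def uOfCop (g' p : X ⊗[k] X →ₗ[k] X) : X ⊗[k] X →ₗ[k] X :=
  p ∘ₗ (TensorProduct.comm k X X).toLinearMap ∘ₗ GmapCop k X g'

/-- `Hmap f (x ⊗ y) = f (y₍₂₎ ⊗ x) ⊗ y₍₁₎` -/
def Hmap (f : X ⊗[k] X →ₗ[k] X) : X ⊗[k] X →ₗ[k] X ⊗[k] X :=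
  TensorProduct.map f LinearMap.id ∘ₗ (TensorProduct.assoc k X X X).symm.toLinearMap ∘ₗ
    LinearMap.lTensor X (TensorProduct.comm k X X).toLinearMap ∘ₗ
    (TensorProduct.assoc k X X X).toLinearMap ∘ₗ
    LinearMap.rTensor X (comulCop k X) ∘ₗ (TensorProduct.comm k X X).toLinearMap

/-- `HmapCop f (x ⊗ y) = f (y₍₁₎ ⊗ x) ⊗ y₍₂₎` -/
def HmapCop (f : X ⊗[k] X →ₗ[k] X) : X ⊗[k] X →ₗ[k] X ⊗[k] X :=
  TensorProduct.map f LinearMap.id ∘ₗ (TensorProduct.assoc k X X X).symm.toLinearMap ∘ₗ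
    LinearMap.lTensor X (TensorProduct.comm k X X).toLinearMap ∘ₗ
    (TensorProduct.assoc k X X X).toLinearMap ∘ₗ
    LinearMap.rTensor X (Coalgebra.comul (R := k)) ∘ₗ (TensorProduct.comm k X X).toLinearMap

/-! ### Auxiliary lemmas for the proof of `stmt_5` -/

section Aux

variable {M : Type} [AddCommGroup M] [Module k M]

lemma repr_smul_right {x : X} (r : Coalgebra.Repr k x (X × X)) :
    ∑ i ∈ r.index, Coalgebra.counit (R := k) (r.right i) • r.left i = x := by
  have h2 := congrArg (TensorProduct.rid k X) (Coalgebra.sum_tmul_counit_eq (R := k) r)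
  simp only [map_sum, LinearEquiv.coe_coe] at h2
  simp only [TensorProduct.rid_tmul, one_smul] at h2
  exact h2

lemma repr_smul_left {x : X} (r : Coalgebra.Repr k x (X × X)) :
    ∑ i ∈ r.index, Coalgebra.counit (R := k) (r.left i) • r.right i = x := by
  have h2 := congrArg (TensorProduct.lid k X) (Coalgebra.sum_counit_tmul_eq (R := k) r)
  simp only [map_sum, LinearEquiv.coe_coe] at h2
  simp only [TensorProduct.lid_tmul, one_smul] at h2
  exact h2

lemma repr_collapseR (F : X →ₗ[k] M) {x : X} (r : Coalgebra.Repr k x (X × X)) :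
    ∑ i ∈ r.index, Coalgebra.counit (R := k) (r.right i) • F (r.left i) = F x := by
  simp_rw [← map_smul, ← map_sum]
  rw [repr_smul_right k X r]

lemma repr_collapseL (F : X →ₗ[k] M) {x : X} (r : Coalgebra.Repr k x (X × X)) :
    ∑ i ∈ r.index, Coalgebra.counit (R := k) (r.left i) • F (r.right i) = F x := by
  simp_rw [← map_smul, ← map_sum]
  rw [repr_smul_left k X r]

lemma cE_tmul (x y : X) : cE k X (x ⊗ₜ[k] y) = Coalgebra.counit (R := k) y • x := by
  simp [cE]

lemma cE'_tmul (x y : X) : cE' k X (x ⊗ₜ[k] y) = Coalgebra.counit (R := k) x • y := by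
  simp [cE']

lemma gmap_tmul (f : X ⊗[k] X →ₗ[k] X) (x y : X) (r : Coalgebra.Repr k y (X × X)) :
    Gmap k X f (x ⊗ₜ[k] y) = ∑ i ∈ r.index, f (x ⊗ₜ[k] r.left i) ⊗ₜ[k] r.right i := by
  simp only [Gmap, LinearMap.comp_apply, LinearEquiv.coe_coe, LinearMap.lTensor_tmul]
  rw [← r.eq]
  simp [TensorProduct.tmul_sum, map_sum]

lemma gcop_tmul (f : X ⊗[k] X →ₗ[k] X) (x y : X) (r : Coalgebra.Repr k y (X × X)) :
    GmapCop k X f (x ⊗ₜ[k] y) = ∑ i ∈ r.index, f (x ⊗ₜ[k] r.right i) ⊗ₜ[k] r.left i := by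
  simp only [GmapCop, comulCop, LinearMap.comp_apply, LinearEquiv.coe_coe,
    LinearMap.lTensor_tmul]
  rw [← r.eq]
  simp [TensorProduct.tmul_sum, map_sum]

lemma comulT_tmul (x y : X) (rx : Coalgebra.Repr k x (X × X)) (ry : Coalgebra.Repr k y (X × X)) :
    comulT k X (x ⊗ₜ[k] y) = ∑ i ∈ rx.index, ∑ j ∈ ry.index,
      (rx.left i ⊗ₜ[k] ry.left j) ⊗ₜ[k] (rx.right i ⊗ₜ[k] ry.right j) := by
  simp only [comulT, LinearMap.comp_apply, LinearEquiv.coe_coe, TensorProduct.map_tmul]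
  rw [← rx.eq, ← ry.eq]
  simp only [TensorProduct.sum_tmul, TensorProduct.tmul_sum, map_sum, LinearEquiv.coe_coe,
    TensorProduct.tensorTensorTensorComm_tmul]
  rw [Finset.sum_comm]

lemma gmap_cE : Gmap k X (cE k X) = LinearMap.id := by
  apply TensorProduct.ext'
  intro x y
  rw [gmap_tmul k X _ x y (Coalgebra.Repr.arbitrary k y)]
  have h := repr_collapseL k X (TensorProduct.mk k X X x) (Coalgebra.Repr.arbitrary k y)
  simp only [TensorProduct.mk_apply] at h
  simp only [cE_tmul, ← TensorProduct.smul_tmul', LinearMap.id_coe, id_eq]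
  exact h

lemma gcop_cE : GmapCop k X (cE k X) = LinearMap.id := by
  apply TensorProduct.ext'
  intro x y
  rw [gcop_tmul k X _ x y (Coalgebra.Repr.arbitrary k y)]
  have h := repr_collapseR k X (TensorProduct.mk k X X x) (Coalgebra.Repr.arbitrary k y)
  simp only [TensorProduct.mk_apply] at h
  simp only [cE_tmul, ← TensorProduct.smul_tmul', LinearMap.id_coe, id_eq]
  exact h

lemma cE_gmap (f : X ⊗[k] X →ₗ[k] X) : cE k X ∘ₗ Gmap k X f = f := by
  apply TensorProduct.ext'
  intro x y
  rw [LinearMap.comp_apply, gmap_tmul k X f x y (Coalgebra.Repr.arbitrary k y), map_sum]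
  have h := repr_collapseR k X (f ∘ₗ TensorProduct.mk k X X x) (Coalgebra.Repr.arbitrary k y)
  simp only [LinearMap.comp_apply, TensorProduct.mk_apply] at h
  simpa [cE_tmul] using h

lemma cE_gcop (f : X ⊗[k] X →ₗ[k] X) : cE k X ∘ₗ GmapCop k X f = f := by
  apply TensorProduct.ext'
  intro x y
  rw [LinearMap.comp_apply, gcop_tmul k X f x y (Coalgebra.Repr.arbitrary k y), map_sum]
  have h := repr_collapseL k X (f ∘ₗ TensorProduct.mk k X X x) (Coalgebra.Repr.arbitrary k y)
  simp only [LinearMap.comp_apply, TensorProduct.mk_apply] at h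
  simpa [cE_tmul] using h

lemma gmap_eq (f : X ⊗[k] X →ₗ[k] X) :
    Gmap k X f = TensorProduct.map f (cE' k X) ∘ₗ comulT k X := by
  apply TensorProduct.ext'
  intro x y
  rw [gmap_tmul k X f x y (Coalgebra.Repr.arbitrary k y), LinearMap.comp_apply,
    comulT_tmul k X x y (Coalgebra.Repr.arbitrary k x) (Coalgebra.Repr.arbitrary k y), map_sum]
  simp only [map_sum, TensorProduct.map_tmul, cE'_tmul]
  rw [Finset.sum_comm]
  refine Finset.sum_congr rfl fun j _ => ?_
  have h := repr_collapseR k X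
    (((TensorProduct.mk k X X).flip ((Coalgebra.Repr.arbitrary k y).right j)) ∘ₗ f ∘ₗ
      ((TensorProduct.mk k X X).flip ((Coalgebra.Repr.arbitrary k y).left j)))
    (Coalgebra.Repr.arbitrary k x)
  simp only [LinearMap.comp_apply, LinearMap.flip_apply, TensorProduct.mk_apply] at h
  rw [← h]
  exact Finset.sum_congr rfl fun i _ => by rw [TensorProduct.tmul_smul]

lemma gcop_eq (f : X ⊗[k] X →ₗ[k] X) :
    GmapCop k X f = (TensorProduct.comm k X X).toLinearMap ∘ₗ
      TensorProduct.map (cE' k X) f ∘ₗ comulT k X := by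
  apply TensorProduct.ext'
  intro x y
  rw [gcop_tmul k X f x y (Coalgebra.Repr.arbitrary k y), LinearMap.comp_apply,
    LinearMap.comp_apply,
    comulT_tmul k X x y (Coalgebra.Repr.arbitrary k x) (Coalgebra.Repr.arbitrary k y), map_sum]
  simp only [map_sum, TensorProduct.map_tmul, cE'_tmul, LinearEquiv.coe_coe,
    TensorProduct.comm_tmul]
  rw [Finset.sum_comm]
  refine Finset.sum_congr rfl fun j _ => ?_
  have h := repr_collapseL k X
    (((TensorProduct.mk k X X).flip ((Coalgebra.Repr.arbitrary k y).left j)) ∘ₗ f ∘ₗ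
      ((TensorProduct.mk k X X).flip ((Coalgebra.Repr.arbitrary k y).right j)))
    (Coalgebra.Repr.arbitrary k x)
  simp only [LinearMap.comp_apply, LinearMap.flip_apply, TensorProduct.mk_apply] at h
  rw [← h]
  exact Finset.sum_congr rfl fun i _ => by
    rw [TensorProduct.smul_tmul', TensorProduct.tmul_smul, TensorProduct.smul_tmul']

/-- auxiliary map `a ⊗ (b ⊗ c) ↦ f (g (x ⊗ a) ⊗ b) ⊗ c` -/
def Vmap (f g : X ⊗[k] X →ₗ[k] X) (x : X) : X ⊗[k] (X ⊗[k] X) →ₗ[k] X ⊗[k] X :=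
  TensorProduct.map f LinearMap.id ∘ₗ (TensorProduct.assoc k X X X).symm.toLinearMap ∘ₗ
    TensorProduct.map (g ∘ₗ TensorProduct.mk k X X x) LinearMap.id

lemma Vmap_tmul (f g : X ⊗[k] X →ₗ[k] X) (x a b c : X) :
    Vmap k X f g x (a ⊗ₜ[k] (b ⊗ₜ[k] c)) = f (g (x ⊗ₜ[k] a) ⊗ₜ[k] b) ⊗ₜ[k] c := by
  simp [Vmap]

/-- auxiliary map `a ⊗ (b ⊗ c) ↦ f (g (x ⊗ c) ⊗ b) ⊗ a` -/
def Umap (f g : X ⊗[k] X →ₗ[k] X) (x : X) : X ⊗[k] (X ⊗[k] X) →ₗ[k] X ⊗[k] X :=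
  LinearMap.rTensor X (f ∘ₗ TensorProduct.map (g ∘ₗ TensorProduct.mk k X X x) LinearMap.id ∘ₗ
    (TensorProduct.comm k X X).toLinearMap) ∘ₗ (TensorProduct.comm k X (X ⊗[k] X)).toLinearMap

lemma Umap_tmul (f g : X ⊗[k] X →ₗ[k] X) (x a b c : X) :
    Umap k X f g x (a ⊗ₜ[k] (b ⊗ₜ[k] c)) = f (g (x ⊗ₜ[k] c) ⊗ₜ[k] b) ⊗ₜ[k] a := by
  simp [Umap]

lemma gmap_comp (f g : X ⊗[k] X →ₗ[k] X) :
    Gmap k X f ∘ₗ Gmap k X g = Gmap k X (f ∘ₗ Gmap k X g) := by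
  apply TensorProduct.ext'
  intro x y
  have h := Coalgebra.sum_tmul_tmul_eq (Coalgebra.Repr.arbitrary k y)
    (fun i => Coalgebra.Repr.arbitrary k ((Coalgebra.Repr.arbitrary k y).left i))
    (fun i => Coalgebra.Repr.arbitrary k ((Coalgebra.Repr.arbitrary k y).right i))
  have h2 := congrArg (Vmap k X f g x) h
  simp only [map_sum, Vmap_tmul] at h2
  rw [LinearMap.comp_apply, gmap_tmul k X g x y (Coalgebra.Repr.arbitrary k y), map_sum,
    gmap_tmul k X _ x y (Coalgebra.Repr.arbitrary k y)]
  have e1 : ∀ i ∈ (Coalgebra.Repr.arbitrary k y).index,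
      Gmap k X f (g (x ⊗ₜ[k] (Coalgebra.Repr.arbitrary k y).left i) ⊗ₜ[k]
        (Coalgebra.Repr.arbitrary k y).right i) =
      ∑ j ∈ (Coalgebra.Repr.arbitrary k ((Coalgebra.Repr.arbitrary k y).right i)).index,
        f (g (x ⊗ₜ[k] (Coalgebra.Repr.arbitrary k y).left i) ⊗ₜ[k]
          (Coalgebra.Repr.arbitrary k ((Coalgebra.Repr.arbitrary k y).right i)).left j) ⊗ₜ[k]
          (Coalgebra.Repr.arbitrary k ((Coalgebra.Repr.arbitrary k y).right i)).right j :=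
    fun i _ => gmap_tmul k X f _ _ _
  have e2 : ∀ i ∈ (Coalgebra.Repr.arbitrary k y).index,
      (f ∘ₗ Gmap k X g) (x ⊗ₜ[k] (Coalgebra.Repr.arbitrary k y).left i) ⊗ₜ[k]
        (Coalgebra.Repr.arbitrary k y).right i =
      ∑ j ∈ (Coalgebra.Repr.arbitrary k ((Coalgebra.Repr.arbitrary k y).left i)).index,
        f (g (x ⊗ₜ[k]
          (Coalgebra.Repr.arbitrary k ((Coalgebra.Repr.arbitrary k y).left i)).left j) ⊗ₜ[k]
          (Coalgebra.Repr.arbitrary k ((Coalgebra.Repr.arbitrary k y).left i)).right j) ⊗ₜ[k]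
          (Coalgebra.Repr.arbitrary k y).right i := fun i _ => by
    rw [LinearMap.comp_apply, gmap_tmul k X g x _
      (Coalgebra.Repr.arbitrary k ((Coalgebra.Repr.arbitrary k y).left i)), map_sum,
      TensorProduct.sum_tmul]
  rw [Finset.sum_congr rfl e1, Finset.sum_congr rfl e2]
  exact h2.symm

lemma gcop_comp (f g : X ⊗[k] X →ₗ[k] X) :
    GmapCop k X f ∘ₗ GmapCop k X g = GmapCop k X (f ∘ₗ GmapCop k X g) := by
  apply TensorProduct.ext'
  intro x y
  have h := Coalgebra.sum_tmul_tmul_eq (Coalgebra.Repr.arbitrary k y)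
    (fun i => Coalgebra.Repr.arbitrary k ((Coalgebra.Repr.arbitrary k y).left i))
    (fun i => Coalgebra.Repr.arbitrary k ((Coalgebra.Repr.arbitrary k y).right i))
  have h2 := congrArg (Umap k X f g x) h
  simp only [map_sum, Umap_tmul] at h2
  rw [LinearMap.comp_apply, gcop_tmul k X g x y (Coalgebra.Repr.arbitrary k y), map_sum,
    gcop_tmul k X _ x y (Coalgebra.Repr.arbitrary k y)]
  have e1 : ∀ i ∈ (Coalgebra.Repr.arbitrary k y).index,
      GmapCop k X f (g (x ⊗ₜ[k] (Coalgebra.Repr.arbitrary k y).right i) ⊗ₜ[k]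
        (Coalgebra.Repr.arbitrary k y).left i) =
      ∑ j ∈ (Coalgebra.Repr.arbitrary k ((Coalgebra.Repr.arbitrary k y).left i)).index,
        f (g (x ⊗ₜ[k] (Coalgebra.Repr.arbitrary k y).right i) ⊗ₜ[k]
          (Coalgebra.Repr.arbitrary k ((Coalgebra.Repr.arbitrary k y).left i)).right j) ⊗ₜ[k]
          (Coalgebra.Repr.arbitrary k ((Coalgebra.Repr.arbitrary k y).left i)).left j :=
    fun i _ => gcop_tmul k X f _ _ _
  have e2 : ∀ i ∈ (Coalgebra.Repr.arbitrary k y).index,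
      (f ∘ₗ GmapCop k X g) (x ⊗ₜ[k] (Coalgebra.Repr.arbitrary k y).right i) ⊗ₜ[k]
        (Coalgebra.Repr.arbitrary k y).left i =
      ∑ j ∈ (Coalgebra.Repr.arbitrary k ((Coalgebra.Repr.arbitrary k y).right i)).index,
        f (g (x ⊗ₜ[k]
          (Coalgebra.Repr.arbitrary k ((Coalgebra.Repr.arbitrary k y).right i)).right j) ⊗ₜ[k]
          (Coalgebra.Repr.arbitrary k ((Coalgebra.Repr.arbitrary k y).right i)).left j) ⊗ₜ[k]
          (Coalgebra.Repr.arbitrary k y).left i := fun i _ => by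
    rw [LinearMap.comp_apply, gcop_tmul k X g x _
      (Coalgebra.Repr.arbitrary k ((Coalgebra.Repr.arbitrary k y).right i)), map_sum,
      TensorProduct.sum_tmul]
  rw [Finset.sum_congr rfl e1, Finset.sum_congr rfl e2]
  exact h2

end Aux

/-- for an invertible left non-degenerate coalgebra endomorphism `s`, the
map `s̃⁻¹` is left non-degenerate and its associated q-magma coalgebra is `𝒳^op`. -/
theorem stmt_5 (s sinv : X ⊗[k] X →ₗ[k] X ⊗[k] X) (hs : IsCoalgEndo k X s)
    (hinv1 : s ∘ₗ sinv = LinearMap.id) (hinv2 : sinv ∘ₗ s = LinearMap.id)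
    (hnd : LeftNonDeg k X s) (p : X ⊗[k] X →ₗ[k] X) (hp : IsDotOf k X s p) :
    Function.Bijective (GmapCop k X (comp2 k X sinv)) ∧
      (comp2 k X sinv ∘ₗ GmapCop k X (dOf k X s p) = cE k X ∧
        dOf k X s p ∘ₗ GmapCop k X (comp2 k X sinv) = cE k X) ∧
      dOfCop k X sinv (dOf k X s p) = p := by
  classical
  set τ : X ⊗[k] X →ₗ[k] X ⊗[k] X := (TensorProduct.comm k X X).toLinearMap with hτ
  have hττ : τ ∘ₗ τ = LinearMap.id := by
    apply TensorProduct.ext'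
    intro a b
    simp [hτ]
  have hGsGp : Gmap k X (comp2 k X s) ∘ₗ Gmap k X p = LinearMap.id := by
    rw [gmap_comp, hp.1, gmap_cE]
  have hGpGs : Gmap k X p ∘ₗ Gmap k X (comp2 k X s) = LinearMap.id := by
    rw [gmap_comp, hp.2, gmap_cE]
  have e1 : ∀ w, TensorProduct.map sinv sinv (TensorProduct.map s s w) = w := fun w => by
    rw [← LinearMap.comp_apply, ← TensorProduct.map_comp, hinv2, TensorProduct.map_id,
      LinearMap.id_apply]
  have hss : ∀ v, s (sinv v) = v := fun v => by
    simpa using LinearMap.congr_fun hinv1 v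
  have hsv : ∀ v, sinv (s v) = v := fun v => by
    simpa using LinearMap.congr_fun hinv2 v
  have hcop : comulT k X ∘ₗ sinv = TensorProduct.map sinv sinv ∘ₗ comulT k X := by
    apply LinearMap.ext
    intro u
    have h1 := LinearMap.congr_fun hs.1 (sinv u)
    simp only [LinearMap.comp_apply] at h1
    simp only [LinearMap.comp_apply]
    calc comulT k X (sinv u)
        = TensorProduct.map sinv sinv (TensorProduct.map s s (comulT k X (sinv u))) :=
          (e1 _).symm
      _ = TensorProduct.map sinv sinv (comulT k X (s (sinv u))) := by rw [← h1]
      _ = TensorProduct.map sinv sinv (comulT k X u) := by rw [hss]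
  have h9 : comp2 k X s ∘ₗ sinv = cE' k X := by
    show (cE' k X ∘ₗ s) ∘ₗ sinv = cE' k X
    rw [LinearMap.comp_assoc, hinv1, LinearMap.comp_id]
  have key : GmapCop k X (comp2 k X sinv) = τ ∘ₗ Gmap k X (comp2 k X s) ∘ₗ sinv := by
    rw [hτ, gcop_eq, gmap_eq]
    congr 1
    rw [LinearMap.comp_assoc, hcop, ← LinearMap.comp_assoc, ← TensorProduct.map_comp, h9]
    rfl
  set W : X ⊗[k] X →ₗ[k] X ⊗[k] X := s ∘ₗ Gmap k X p ∘ₗ τ with hW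
  have hGsp : ∀ v, Gmap k X (comp2 k X s) (Gmap k X p v) = v := fun v => by
    simpa using LinearMap.congr_fun hGsGp v
  have hGps : ∀ v, Gmap k X p (Gmap k X (comp2 k X s) v) = v := fun v => by
    simpa using LinearMap.congr_fun hGpGs v
  have hτi : ∀ v, τ (τ v) = v := fun v => by
    simpa using LinearMap.congr_fun hττ v
  have keyap : ∀ u, GmapCop k X (comp2 k X sinv) u =
      τ (Gmap k X (comp2 k X s) (sinv u)) := fun u => by
    rw [key]
    simp [LinearMap.comp_apply]
  have hWr : GmapCop k X (comp2 k X sinv) ∘ₗ W = LinearMap.id := by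
    apply LinearMap.ext
    intro u
    simp only [LinearMap.comp_apply, LinearMap.id_apply, hW]
    rw [keyap, hsv, hGsp, hτi]
  have hWl : W ∘ₗ GmapCop k X (comp2 k X sinv) = LinearMap.id := by
    apply LinearMap.ext
    intro u
    simp only [LinearMap.comp_apply, LinearMap.id_apply, hW]
    rw [keyap, hτi, hGps, hss]
  have g2b : dOf k X s p ∘ₗ GmapCop k X (comp2 k X sinv) = cE k X := by
    apply LinearMap.ext
    intro u
    show comp1 k X s (Gmap k X p (τ (GmapCop k X (comp2 k X sinv) u))) = cE k X u
    rw [keyap, hτi, hGps]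
    show cE k X (s (sinv u)) = cE k X u
    rw [hss]
  have hGdG : GmapCop k X (dOf k X s p) ∘ₗ GmapCop k X (comp2 k X sinv) = LinearMap.id := by
    rw [gcop_comp, g2b, gcop_cE]
  have hGd : GmapCop k X (dOf k X s p) = W := by
    calc GmapCop k X (dOf k X s p)
        = GmapCop k X (dOf k X s p) ∘ₗ (GmapCop k X (comp2 k X sinv) ∘ₗ W) := by
          rw [hWr, LinearMap.comp_id]
      _ = (GmapCop k X (dOf k X s p) ∘ₗ GmapCop k X (comp2 k X sinv)) ∘ₗ W := by
          rw [LinearMap.comp_assoc]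
      _ = W := by rw [hGdG, LinearMap.id_comp]
  have g2a : comp2 k X sinv ∘ₗ GmapCop k X (dOf k X s p) = cE k X := by
    conv_lhs => rw [← cE_gcop k X (comp2 k X sinv ∘ₗ GmapCop k X (dOf k X s p)), ← gcop_comp,
      hGd]
    rw [hWr, LinearMap.comp_id]
  refine ⟨?_, ⟨g2a, g2b⟩, ?_⟩
  · refine Function.bijective_iff_has_inverse.mpr ⟨W, fun u => ?_, fun u => ?_⟩
    · simpa using LinearMap.congr_fun hWl u
    · simpa using LinearMap.congr_fun hWr u
  · show comp1 k X sinv ∘ₗ GmapCop k X (dOf k X s p) ∘ₗ τ = p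
    rw [hGd]
    apply LinearMap.ext
    intro u
    show cE k X (sinv (s (Gmap k X p (τ (τ u))))) = p u
    rw [hτi, hsv]
    simpa using LinearMap.congr_fun (cE_gmap k X p) u

end
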